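/- Let n ≥ 5 and let S ⊆ V(B_n) be a set of vertices. Decompose B_n into subgraphs B_n^1, ..., B_n^n by the last symbol, and let A_2 be the union of those B_n^i containing at most n−3 vertices of S. Then the subgraph A_2 − S (the induced subgraph on vertices of A_2 not in S) is connected. -/

import Mathlib

open Equiv Set

/-- The bubble-sort graph `B_n`: the Cayley graph of the symmetric group on `Fin n`
generated by the adjacent transpositions (acting by right multiplication). -/
def bubbleSortGraph (n : ℕ) : SimpleGraph (Equiv.Perm (Fin n)) :=
  SimpleGraph.fromRel (fun u v => ∃ i j : Fin n, (i : ℕ) + 1 = (j : ℕ) ∧ v = u * Equiv.swap i j)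

namespace BSGAux

def coset (n k : ℕ) (f : Fin n → Fin n) : Set (Equiv.Perm (Fin n)) :=
  {u | ∀ j : Fin n, k ≤ (j : ℕ) → u j = f j}

def Xset (n : ℕ) (K1 K : Fin n) (i j : Fin n) : Set (Equiv.Perm (Fin n)) :=
  {x | (x K = i ∧ x K1 = j) ∨ (x K = j ∧ x K1 = i)}

lemma coset_mono {n k k' : ℕ} (h : k ≤ k') (f : Fin n → Fin n) :
    coset n k f ⊆ coset n k' f := fun u hu j hj => hu j (le_trans h hj)

lemma self_mem_coset {n k : ℕ} (u : Equiv.Perm (Fin n)) : u ∈ coset n k ⇑u := fun _ _ => rfl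

lemma coset_congr {n k : ℕ} {f : Fin n → Fin n} {u : Equiv.Perm (Fin n)} (hu : u ∈ coset n k f) :
    coset n k ⇑u = coset n k f := by
  ext w
  constructor
  · exact fun hw j hj => (hw j hj).trans (hu j hj)
  · exact fun hw j hj => (hw j hj).trans (hu j hj).symm

lemma mul_swap_mem_coset {n k : ℕ} (u : Equiv.Perm (Fin n)) {p q : Fin n}
    (hp : (p:ℕ) < k) (hq : (q:ℕ) < k) : u * Equiv.swap p q ∈ coset n k ⇑u := by
  intro j hj
  have hjp : j ≠ p := by intro e; rw [e] at hj; omega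
  have hjq : j ≠ q := by intro e; rw [e] at hj; omega
  simp [Equiv.Perm.mul_apply, Equiv.swap_apply_of_ne_of_ne hjp hjq]

lemma adj_mul_swap {n : ℕ} (u : Equiv.Perm (Fin n)) {i j : Fin n} (h : (i:ℕ)+1 = j) :
    (bubbleSortGraph n).Adj u (u * Equiv.swap i j) := by
  have hij : i ≠ j := by intro e; rw [e] at h; omega
  refine ⟨fun e => ?_, Or.inl ⟨i, j, h, rfl⟩⟩
  have : u i = (u * Equiv.swap i j) i := by rw [← e]
  simp [Equiv.Perm.mul_apply, Equiv.swap_apply_left] at this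
  exact hij this

lemma reach_mono {n : ℕ} {s t : Set (Equiv.Perm (Fin n))} (hst : s ⊆ t) {a b} (ha : a ∈ s)
    (hb : b ∈ s)
    (h : ((bubbleSortGraph n).induce s).Reachable ⟨a, ha⟩ ⟨b, hb⟩) :
    ((bubbleSortGraph n).induce t).Reachable ⟨a, hst ha⟩ ⟨b, hst hb⟩ :=
  h.map ⟨Set.inclusion hst, fun hadj => hadj⟩

lemma reach_of_adj {n : ℕ} {s : Set (Equiv.Perm (Fin n))} {a b} (ha : a ∈ s) (hb : b ∈ s)
    (h : (bubbleSortGraph n).Adj a b) :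
    ((bubbleSortGraph n).induce s).Reachable ⟨a, ha⟩ ⟨b, hb⟩ :=
  SimpleGraph.Adj.reachable (by exact h)

lemma perm_eq_of_eq_off {α : Type*} (a b : Equiv.Perm α) (x₀ : α)
    (h : ∀ x, x ≠ x₀ → a x = b x) : a = b := by
  have hx0 : a x₀ = b x₀ := by
    obtain ⟨y, hy⟩ := b.surjective (a x₀)
    by_cases hyx : y = x₀
    · rw [← hy, hyx]
    · exfalso
      have h1 : a y = b y := h y hyx
      rw [hy] at h1
      exact hyx (a.injective h1)
  exact Equiv.ext fun x => by
    by_cases hx : x = x₀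
    · rw [hx]; exact hx0
    · exact h x hx

lemma coset_ncard_ge {n : ℕ} (k : ℕ) (hk : k ≤ n) (u₀ : Equiv.Perm (Fin n)) :
    k.factorial ≤ (coset n k ⇑u₀).ncard := by
  classical
  let emb : Fin k ↪ Fin n := Fin.castLEEmb hk
  set φ : Equiv.Perm (Fin k) → Equiv.Perm (Fin n) :=
    fun π => u₀ * π.viaFintypeEmbedding emb with hφ
  have hmem : ∀ π, φ π ∈ coset n k ⇑u₀ := by
    intro π j hj
    have hnr : j ∉ Set.range emb := by
      rintro ⟨x, rfl⟩
      have h1 : ((emb x : Fin n) : ℕ) < k := by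
        simp only [emb, Fin.castLEEmb_apply, Fin.coe_castLE]
        exact x.2
      omega
    simp only [hφ, Equiv.Perm.mul_apply]
    rw [Equiv.Perm.viaFintypeEmbedding_apply_notMem_range _ _ hnr]
  have hinj : Function.Injective φ := by
    intro π π' h
    have h2 : π.viaFintypeEmbedding emb = π'.viaFintypeEmbedding emb := mul_left_cancel h
    ext x
    have := congrArg (fun (e : Equiv.Perm (Fin n)) => e (emb x)) h2
    simp only [Equiv.Perm.viaFintypeEmbedding_apply_image] at this
    exact congrArg Fin.val (emb.injective this)
  calc k.factorial = Fintype.card (Equiv.Perm (Fin k)) := by simp [Fintype.card_perm]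
    _ = (Set.range φ).ncard := by
        rw [Set.ncard_eq_toFinset_card', Set.toFinset_range,
          Finset.card_image_of_injective _ hinj]
        simp
    _ ≤ (coset n k ⇑u₀).ncard := by
        apply Set.ncard_le_ncard _ (Set.toFinite _)
        rintro _ ⟨π, rfl⟩; exact hmem π

lemma Xset_disj {n : ℕ} {K1 K i j l : Fin n} (hij : i ≠ j) (hil : i ≠ l) (hjl : j ≠ l) :
    Disjoint (Xset n K1 K i j) (Xset n K1 K i l) := by
  rw [Set.disjoint_left]
  rintro x (⟨h1, h2⟩ | ⟨h1, h2⟩) (⟨h3, h4⟩ | ⟨h3, h4⟩) <;> simp_all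

lemma Xset_disj' {n : ℕ} {K1 K i j l : Fin n} (hij : i ≠ j) (hil : i ≠ l) (hjl : j ≠ l) :
    Disjoint (Xset n K1 K i j) (Xset n K1 K l j) := by
  rw [Set.disjoint_left]
  rintro x (⟨h1, h2⟩ | ⟨h1, h2⟩) (⟨h3, h4⟩ | ⟨h3, h4⟩) <;> simp_all

lemma dead_count {n : ℕ} {K1 K : Fin n} (hs : (K1:ℕ) + 1 = K) (T : Set (Equiv.Perm (Fin n)))
    (u₀ : Equiv.Perm (Fin n)) (hij : u₀ K ≠ u₀ K1)
    (hdead : ∀ u ∈ coset n (K1:ℕ) ⇑u₀, u ∈ T ∨ u * Equiv.swap K1 K ∈ T) :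
    ((K1:ℕ)).factorial ≤ (T ∩ Xset n K1 K (u₀ K) (u₀ K1)).ncard := by
  classical
  set E := coset n (K1:ℕ) ⇑u₀ with hE
  have hEK : ∀ u ∈ E, u K = u₀ K := fun u hu => hu K (by omega)
  have hEK1 : ∀ u ∈ E, u K1 = u₀ K1 := fun u hu => hu K1 (le_refl _)
  set s := Equiv.swap K1 K with hsdef
  have hsK : ∀ u : Equiv.Perm (Fin n), (u * s) K = u K1 := fun u => by
    simp [hsdef, Equiv.Perm.mul_apply, Equiv.swap_apply_right]
  have hsK1 : ∀ u : Equiv.Perm (Fin n), (u * s) K1 = u K := fun u => by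
    simp [hsdef, Equiv.Perm.mul_apply, Equiv.swap_apply_left]
  set φ : Equiv.Perm (Fin n) → Equiv.Perm (Fin n) := fun u => if u ∈ T then u else u * s with hφ
  have himg : φ '' E ⊆ T ∩ Xset n K1 K (u₀ K) (u₀ K1) := by
    rintro _ ⟨u, hu, rfl⟩
    by_cases huT : u ∈ T
    · simp only [hφ, if_pos huT]
      exact ⟨huT, Or.inl ⟨hEK u hu, hEK1 u hu⟩⟩
    · simp only [hφ, if_neg huT]
      refine ⟨(hdead u hu).resolve_left huT, Or.inr ⟨?_, ?_⟩⟩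
      · rw [hsK]; exact hEK1 u hu
      · rw [hsK1]; exact hEK u hu
  have hinj : Set.InjOn φ E := by
    intro u hu u' hu' heq
    by_cases h1 : u ∈ T <;> by_cases h2 : u' ∈ T <;>
      simp only [hφ, if_pos, if_neg, h1, h2, if_true, if_false] at heq
    · exact heq
    · exfalso
      have : u K = u₀ K := hEK u hu
      rw [heq, hsK] at this
      rw [hEK1 u' hu'] at this
      exact hij this.symm
    · exfalso
      have : u' K = u₀ K := hEK u' hu'
      rw [← heq, hsK] at this
      rw [hEK1 u hu] at this
      exact hij this.symm
    · exact mul_right_cancel heq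
  calc ((K1:ℕ)).factorial ≤ E.ncard := coset_ncard_ge _ (by omega) u₀
    _ = (φ '' E).ncard := (Set.ncard_image_of_injOn hinj).symm
    _ ≤ _ := Set.ncard_le_ncard himg (Set.toFinite _)

end BSGAux

namespace BSGAux

lemma key {n : ℕ} : ∀ k, k ≤ n → ∀ (f : Fin n → Fin n) (T : Set (Equiv.Perm (Fin n))),
    T.ncard ≤ k - 2 →
    ((bubbleSortGraph n).induce (coset n k f \ T)).Preconnected := by
  intro k
  induction k with
  | zero =>
    intro _ f T _ ⟨a, ha⟩ ⟨b, hb⟩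
    have hab : a = b := Equiv.ext fun j => (ha.1 j (Nat.zero_le _)).trans (hb.1 j (Nat.zero_le _)).symm
    subst hab
    rfl
  | succ k ih =>
    rcases Nat.lt_or_ge k 2 with h2 | h2
    · -- base cases k+1 = 1 or 2
      interval_cases k
      · -- k+1 = 1
        intro hk f T _ ⟨a, ha⟩ ⟨b, hb⟩
        have hab : a = b := by
          apply perm_eq_of_eq_off a b ⟨0, by omega⟩
          intro x hx
          have hx1 : 1 ≤ (x:ℕ) := by
            rcases Nat.eq_zero_or_pos (x:ℕ) with h | h
            · exact absurd (Fin.ext h) hx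
            · exact h
          exact (ha.1 x hx1).trans (hb.1 x hx1).symm
        subst hab
        rfl
      · -- k+1 = 2
        intro hk f T _ ⟨a, ha⟩ ⟨b, hb⟩
        have hn2 : 2 ≤ n := hk
        set z : Fin n := ⟨0, by omega⟩ with hz
        set o : Fin n := ⟨1, by omega⟩ with ho
        have hzo : z ≠ o := by intro e; have := congrArg Fin.val e; simp [hz, ho] at this
        by_cases hcase : a z = b z
        · have hab : a = b := by
            apply perm_eq_of_eq_off a b o
            intro x hx
            by_cases hxz : x = z
            · rw [hxz]; exact hcase
            · have : 2 ≤ (x:ℕ) := by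
                have h0 : (x:ℕ) ≠ 0 := fun e => hxz (Fin.ext e)
                have h1 : (x:ℕ) ≠ 1 := fun e => hx (Fin.ext e)
                omega
              exact (ha.1 x this).trans (hb.1 x this).symm
          subst hab
          rfl
        · -- b = a * swap z o
          have hoz : a o = b z := by
            obtain ⟨y, hy⟩ := a.surjective (b z)
            by_cases hyz : y = z
            · exact absurd (hyz ▸ hy) hcase
            · by_cases hyo : y = o
              · rw [← hyo, hy]
              · have h2y : 2 ≤ (y:ℕ) := by
                  have h0 : (y:ℕ) ≠ 0 := fun e => hyz (Fin.ext e)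
                  have h1 : (y:ℕ) ≠ 1 := fun e => hyo (Fin.ext e)
                  omega
                exfalso
                have : b y = b z := by rw [← (ha.1 y h2y).trans (hb.1 y h2y).symm, hy]
                have := b.injective this
                rw [this] at h2y
                simp [hz] at h2y
          have hzo2 : a z = b o := by
            obtain ⟨y, hy⟩ := a.surjective (b o)
            by_cases hyz : y = z
            · rw [← hyz, hy]
            · by_cases hyo : y = o
              · exfalso
                rw [hyo] at hy
                rw [hoz] at hy
                exact hzo (b.injective hy)
              · have h2y : 2 ≤ (y:ℕ) := by
                  have h0 : (y:ℕ) ≠ 0 := fun e => hyz (Fin.ext e)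
                  have h1 : (y:ℕ) ≠ 1 := fun e => hyo (Fin.ext e)
                  omega
                exfalso
                have : b y = b o := by rw [← (ha.1 y h2y).trans (hb.1 y h2y).symm, hy]
                have := b.injective this
                rw [this] at h2y
                simp [ho] at h2y
          have hba : b = a * Equiv.swap z o := by
            apply Equiv.ext
            intro x
            by_cases hxz : x = z
            · rw [hxz]
              simp only [Equiv.Perm.mul_apply, Equiv.swap_apply_left]
              exact hoz.symm
            · by_cases hxo : x = o
              · rw [hxo]
                simp only [Equiv.Perm.mul_apply, Equiv.swap_apply_right]
                exact hzo2.symm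
              · have h2x : 2 ≤ (x:ℕ) := by
                  have h0 : (x:ℕ) ≠ 0 := fun e => hxz (Fin.ext e)
                  have h1 : (x:ℕ) ≠ 1 := fun e => hxo (Fin.ext e)
                  omega
                simp only [Equiv.Perm.mul_apply, Equiv.swap_apply_of_ne_of_ne hxz hxo]
                exact (hb.1 x h2x).trans (ha.1 x h2x).symm
          apply reach_of_adj
          rw [hba]
          exact adj_mul_swap a (by simp [hz, ho])
    · -- main step, k ≥ 2
      intro hk f T hT
      have hkn : k ≤ n := by omega
      have hT' : T.ncard ≤ k - 1 := by omega
      set K : Fin n := ⟨k, by omega⟩ with hKdef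
      set K1 : Fin n := ⟨k-1, by omega⟩ with hK1def
      have hKv : (K:ℕ) = k := rfl
      have hK1v : (K1:ℕ) = k - 1 := rfl
      have hKK1 : (K1:ℕ) + 1 = (K:ℕ) := by omega
      have hK1K : K1 ≠ K := by
        intro e
        have := congrArg Fin.val e
        rw [hKv, hK1v] at this
        omega
      set s := Equiv.swap K1 K with hsdef
      have h_sK : ∀ u : Equiv.Perm (Fin n), (u * s) K = u K1 := fun u => by
        simp [hsdef, Equiv.Perm.mul_apply, Equiv.swap_apply_right]
      have h_sK1 : ∀ u : Equiv.Perm (Fin n), (u * s) K1 = u K := fun u => by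
        simp [hsdef, Equiv.Perm.mul_apply, Equiv.swap_apply_left]
      have h_ss : ∀ u : Equiv.Perm (Fin n), u * s * s = u := fun u => by
        rw [mul_assoc, hsdef, Equiv.swap_mul_self, mul_one]
      have hsubC : ∀ x, x ∈ coset n (k+1) f → coset n k ⇑x ⊆ coset n (k+1) f := by
        intro x hx w hw
        have h1 : w ∈ coset n (k+1) ⇑x := coset_mono (by omega) _ hw
        rwa [coset_congr hx] at h1
      have h_sC : ∀ u, u ∈ coset n (k+1) f → u * s ∈ coset n (k+1) f := by
        intro u hu
        have h1 : u * s ∈ coset n (k+1) ⇑u := mul_swap_mem_coset u (by omega) (by omega)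
        rwa [coset_congr hu] at h1
      have h_adj : ∀ u : Equiv.Perm (Fin n), (bubbleSortGraph n).Adj u (u * s) := fun u =>
        adj_mul_swap u hKK1
      have tweak : ∀ x, x ∈ coset n (k+1) f → ∀ v : Fin n, (∀ q : Fin n, k ≤ (q:ℕ) → x q ≠ v) →
          ∃ u, u ∈ coset n k ⇑x ∧ u K1 = v ∧ u K = x K := by
        intro x hx v hv
        have hpk : ((x⁻¹ v : Fin n) : ℕ) < k := by
          by_contra hge
          exact hv (x⁻¹ v) (by omega) (by simp)
        refine ⟨x * Equiv.swap K1 (x⁻¹ v), mul_swap_mem_coset x (by omega) hpk, ?_, ?_⟩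
        · simp [Equiv.Perm.mul_apply, Equiv.swap_apply_left]
        · have hKp : K ≠ x⁻¹ v := by
            intro e
            rw [← e, hKv] at hpk
            omega
          simp [Equiv.Perm.mul_apply, Equiv.swap_apply_of_ne_of_ne hK1K.symm hKp,
              Equiv.swap_apply_of_ne_of_ne hK1K.symm (show K ≠ x.symm v from hKp)]
      set alive : Fin n → Fin n → Prop := fun i j =>
        ∃ u, u ∈ coset n (k+1) f ∧ u K = i ∧ u K1 = j ∧ u ∉ T ∧ u * s ∉ T with halivedef
      have alive_symm : ∀ i j, alive i j → alive j i := by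
        rintro i j ⟨u, hu, h1, h2, h3, h4⟩
        exact ⟨u * s, h_sC u hu, by rw [h_sK]; exact h2, by rw [h_sK1]; exact h1, h4,
          by rw [h_ss]; exact h3⟩
      have deadcount : ∀ x, x ∈ coset n (k+1) f → ∀ v, (∀ q : Fin n, k ≤ (q:ℕ) → x q ≠ v) →
          ¬ alive (x K) v → (k-1).factorial ≤ (T ∩ Xset n K1 K (x K) v).ncard := by
        intro x hx v hv hna
        obtain ⟨u₀, hu₀c, hu₀1, hu₀K⟩ := tweak x hx v hv
        have hu₀C : u₀ ∈ coset n (k+1) f := hsubC x hx hu₀c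
        have hdead : ∀ u ∈ coset n (K1:ℕ) ⇑u₀, u ∈ T ∨ u * Equiv.swap K1 K ∈ T := by
          intro u hu
          by_contra hcon
          push_neg at hcon
          refine hna ⟨u, ?_, ?_, ?_, hcon.1, hcon.2⟩
          · exact hsubC u₀ hu₀C (coset_mono (by omega) _ hu)
          · exact (hu K (by omega)).trans hu₀K
          · exact (hu K1 (by omega)).trans hu₀1
        have hne : u₀ K ≠ u₀ K1 := by
          rw [hu₀K, hu₀1]
          exact hv K (by omega)
        have hcount := dead_count hKK1 T u₀ hne hdead
        rw [hu₀K, hu₀1] at hcount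
        exact hcount
      have intra : ∀ x y (hx : x ∈ coset n (k+1) f \ T) (hy : y ∈ coset n (k+1) f \ T),
          x K = y K → (T ∩ coset n k ⇑x).ncard ≤ k - 2 →
          ((bubbleSortGraph n).induce (coset n (k+1) f \ T)).Reachable ⟨x, hx⟩ ⟨y, hy⟩ := by
        intro x y hx hy hxy hcnt
        have hyx : y ∈ coset n k ⇑x := by
          intro j hj
          rcases Nat.eq_or_lt_of_le hj with he | hl
          · have hjK : j = K := Fin.ext he.symm
            rw [hjK]
            exact hxy.symm
          · exact (hy.1 j (by omega)).trans (hx.1 j (by omega)).symm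
        have hmemx : x ∈ coset n k ⇑x \ (T ∩ coset n k ⇑x) :=
          ⟨self_mem_coset x, fun h => hx.2 h.1⟩
        have hmemy : y ∈ coset n k ⇑x \ (T ∩ coset n k ⇑x) := ⟨hyx, fun h => hy.2 h.1⟩
        have hre := ih hkn ⇑x (T ∩ coset n k ⇑x) hcnt ⟨x, hmemx⟩ ⟨y, hmemy⟩
        have hsub : coset n k ⇑x \ (T ∩ coset n k ⇑x) ⊆ coset n (k+1) f \ T := by
          intro w hw
          exact ⟨hsubC x hx.1 hw.1, fun hwT => hw.2 ⟨hwT, hw.1⟩⟩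
        exact reach_mono hsub hmemx hmemy hre
      rintro ⟨a, ha⟩ ⟨b, hb⟩
      by_cases hgood : ∀ u, u ∈ coset n (k+1) f → (T ∩ coset n k ⇑u).ncard ≤ k - 2
      · by_cases hab : a K = b K
        · exact intra a b ha hb hab (hgood a ha.1)
        · have hvj : ∀ q : Fin n, k ≤ (q:ℕ) → a q ≠ b K := by
            intro q hq he
            rcases Nat.eq_or_lt_of_le hq with heq | hlt
            · exact hab ((Fin.ext heq.symm : q = K) ▸ he)
            · have h1 : a q = b q := (ha.1 q (by omega)).trans (hb.1 q (by omega)).symm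
              rw [h1] at he
              have h3 := b.injective he
              rw [h3, hKv] at hlt
              omega
          by_cases hal : alive (a K) (b K)
          · obtain ⟨u, huC, huK, huK1, huT, husT⟩ := hal
            have m1 : u ∈ coset n (k+1) f \ T := ⟨huC, huT⟩
            have m2 : u * s ∈ coset n (k+1) f \ T := ⟨h_sC u huC, husT⟩
            refine ((intra a u ha m1 huK.symm (hgood a ha.1)).trans
              (reach_of_adj m1 m2 (h_adj u))).trans
              (intra (u*s) b m2 hb ?_ (hgood (u*s) m2.1))
            rw [h_sK]
            exact huK1
          · obtain ⟨m, hmk, hmp⟩ : ∃ m : Fin n, (m:ℕ) < k ∧ m ≠ a⁻¹ (b K) := by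
              by_cases h0 : ((a⁻¹ (b K) : Fin n) : ℕ) = 0
              · refine ⟨⟨1, by omega⟩, by show (1:ℕ) < k; omega, fun e => ?_⟩
                have h5 : (1:ℕ) = ((a⁻¹ (b K) : Fin n) : ℕ) := congrArg Fin.val e
                omega
              · refine ⟨⟨0, by omega⟩, by show (0:ℕ) < k; omega, fun e => ?_⟩
                have h5 : (0:ℕ) = ((a⁻¹ (b K) : Fin n) : ℕ) := congrArg Fin.val e
                omega
            have hli : a m ≠ a K := by
              intro e
              have h3 := a.injective e
              rw [h3, hKv] at hmk
              omega
            have hlj : a m ≠ b K := by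
              intro e
              apply hmp
              rw [← e]
              simp
            have hvl : ∀ q : Fin n, k ≤ (q:ℕ) → a q ≠ a m := by
              intro q hq e
              have h3 := a.injective e
              rw [h3] at hq
              omega
            have hvj' : ∀ q : Fin n, k ≤ (q:ℕ) → b q ≠ a K := by
              intro q hq he
              rcases Nat.eq_or_lt_of_le hq with heq | hlt
              · exact hab (((Fin.ext heq.symm : q = K) ▸ he).symm)
              · have h1 : b q = a q := (hb.1 q (by omega)).trans (ha.1 q (by omega)).symm
                rw [h1] at he
                have h3 := a.injective he
                rw [h3, hKv] at hlt
                omega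
            have hvl' : ∀ q : Fin n, k ≤ (q:ℕ) → b q ≠ a m := by
              intro q hq he
              rcases Nat.eq_or_lt_of_le hq with heq | hlt
              · exact hlj (((Fin.ext heq.symm : q = K) ▸ he).symm)
              · have h1 : b q = a q := (hb.1 q (by omega)).trans (ha.1 q (by omega)).symm
                rw [h1] at he
                exact hvl q hq he
            have hail : alive (a K) (a m) := by
              by_contra hna
              have c1 := deadcount a ha.1 (b K) hvj hal
              have c2 := deadcount a ha.1 (a m) hvl hna
              have hdisj := Xset_disj (n := n) (K1 := K1) (K := K) hab (Ne.symm hli) (Ne.symm hlj)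
              have hdisj2 : Disjoint (T ∩ Xset n K1 K (a K) (b K)) (T ∩ Xset n K1 K (a K) (a m)) :=
                hdisj.mono Set.inter_subset_right Set.inter_subset_right
              have hle : (T ∩ Xset n K1 K (a K) (b K)).ncard
                  + (T ∩ Xset n K1 K (a K) (a m)).ncard ≤ T.ncard := by
                rw [← Set.ncard_union_eq hdisj2 (Set.toFinite _) (Set.toFinite _)]
                exact Set.ncard_le_ncard
                  (Set.union_subset Set.inter_subset_left Set.inter_subset_left) (Set.toFinite _)
              have hfact := Nat.self_le_factorial (k-1)
              omega
            have hbjl : alive (b K) (a m) := by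
              by_contra hna
              have hal' : ¬ alive (b K) (a K) := fun h => hal (alive_symm _ _ h)
              have c1 := deadcount b hb.1 (a K) hvj' hal'
              have c2 := deadcount b hb.1 (a m) hvl' hna
              have hdisj := Xset_disj (n := n) (K1 := K1) (K := K) (Ne.symm hab) (Ne.symm hlj)
                (Ne.symm hli)
              have hdisj2 : Disjoint (T ∩ Xset n K1 K (b K) (a K)) (T ∩ Xset n K1 K (b K) (a m)) :=
                hdisj.mono Set.inter_subset_right Set.inter_subset_right
              have hle : (T ∩ Xset n K1 K (b K) (a K)).ncard
                  + (T ∩ Xset n K1 K (b K) (a m)).ncard ≤ T.ncard := by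
                rw [← Set.ncard_union_eq hdisj2 (Set.toFinite _) (Set.toFinite _)]
                exact Set.ncard_le_ncard
                  (Set.union_subset Set.inter_subset_left Set.inter_subset_left) (Set.toFinite _)
              have hfact := Nat.self_le_factorial (k-1)
              omega
            obtain ⟨u1, hu1C, hu1K, hu1K1, hu1T, hu1sT⟩ := hail
            obtain ⟨u2, hu2C, hu2K, hu2K1, hu2T, hu2sT⟩ := hbjl
            have m1 : u1 ∈ coset n (k+1) f \ T := ⟨hu1C, hu1T⟩
            have m2 : u1 * s ∈ coset n (k+1) f \ T := ⟨h_sC u1 hu1C, hu1sT⟩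
            have m3 : u2 ∈ coset n (k+1) f \ T := ⟨hu2C, hu2T⟩
            have m4 : u2 * s ∈ coset n (k+1) f \ T := ⟨h_sC u2 hu2C, hu2sT⟩
            have r1 := intra a u1 ha m1 hu1K.symm (hgood a ha.1)
            have r2 := reach_of_adj m1 m2 (h_adj u1)
            have r3 := intra (u1*s) (u2*s) m2 m4
              (by rw [h_sK, h_sK, hu1K1, hu2K1]) (hgood _ m2.1)
            have r4 := (reach_of_adj m3 m4 (h_adj u2)).symm
            have r5 := intra u2 b m3 hb hu2K (hgood _ m3.1)
            exact (((r1.trans r2).trans r3).trans r4).trans r5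
      · push_neg at hgood
        obtain ⟨u₀, hu₀C, hu₀n⟩ := hgood
        have hTsub : T ⊆ coset n k ⇑u₀ := by
          have h1 : T ∩ coset n k ⇑u₀ ⊆ T := Set.inter_subset_left
          have hle : T.ncard ≤ (T ∩ coset n k ⇑u₀).ncard := by omega
          have h3 := Set.eq_of_subset_of_ncard_le h1 hle (Set.toFinite T)
          rw [← h3]
          exact Set.inter_subset_right
        have notT : ∀ x : Equiv.Perm (Fin n), x K ≠ u₀ K → x ∉ T := by
          intro x hne hxT
          exact hne ((hTsub hxT) K (by omega))
        have hclean : ∀ w, w ∈ coset n (k+1) f → w K ≠ u₀ K →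
            (T ∩ coset n k ⇑w).ncard ≤ k - 2 := by
          intro w hw hne
          have hempty : T ∩ coset n k ⇑w = ∅ := by
            ext x
            simp only [Set.mem_inter_iff, Set.mem_empty_iff_false, iff_false, not_and]
            intro hxT hxw
            exact hne (((hxw K (by omega)).symm).trans ((hTsub hxT) K (by omega)))
          rw [hempty]
          simp
        have escape : ∀ x (hx : x ∈ coset n (k+1) f \ T), ∃ x', ∃ hx' : x' ∈ coset n (k+1) f \ T,
            x' K ≠ u₀ K ∧
            ((bubbleSortGraph n).induce (coset n (k+1) f \ T)).Reachable ⟨x, hx⟩ ⟨x', hx'⟩ := by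
          intro x hx
          by_cases hxK : x K = u₀ K
          · have hne : (x * s) K ≠ u₀ K := by
              rw [h_sK]
              intro e
              have h3 : x K1 = x K := by rw [e, hxK]
              exact hK1K (x.injective h3)
            exact ⟨x * s, ⟨h_sC x hx.1, notT _ hne⟩, hne,
              reach_of_adj hx ⟨h_sC x hx.1, notT _ hne⟩ (h_adj x)⟩
          · exact ⟨x, hx, hxK, SimpleGraph.Reachable.refl _⟩
        obtain ⟨a', ha', haK, ra⟩ := escape a ha
        obtain ⟨b', hb', hbK, rb⟩ := escape b hb
        have hmid : ((bubbleSortGraph n).induce (coset n (k+1) f \ T)).Reachable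
            ⟨a', ha'⟩ ⟨b', hb'⟩ := by
          by_cases hsame : a' K = b' K
          · exact intra a' b' ha' hb' hsame (hclean a' ha'.1 haK)
          · have hv : ∀ q : Fin n, k ≤ (q:ℕ) → a' q ≠ b' K := by
              intro q hq he
              rcases Nat.eq_or_lt_of_le hq with heq | hlt
              · exact hsame ((Fin.ext heq.symm : q = K) ▸ he)
              · have h1 : a' q = b' q := (ha'.1 q (by omega)).trans (hb'.1 q (by omega)).symm
                rw [h1] at he
                have h3 := b'.injective he
                rw [h3, hKv] at hlt
                omega
            obtain ⟨u, huc, huK1, huK⟩ := tweak a' ha'.1 (b' K) hv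
            have huC : u ∈ coset n (k+1) f := hsubC a' ha'.1 huc
            have huT : u ∉ T := notT u (by rw [huK]; exact haK)
            have husT : u * s ∉ T := notT _ (by rw [h_sK, huK1]; exact hbK)
            have mu : u ∈ coset n (k+1) f \ T := ⟨huC, huT⟩
            have mus : u * s ∈ coset n (k+1) f \ T := ⟨h_sC u huC, husT⟩
            refine ((intra a' u ha' mu huK.symm (hclean a' ha'.1 haK)).trans
              (reach_of_adj mu mus (h_adj u))).trans
              (intra (u*s) b' mus hb' (by rw [h_sK]; exact huK1)
                (hclean _ mus.1 (by rw [h_sK, huK1]; exact hbK)))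
        exact (ra.trans hmid).trans rb.symm


lemma top (n : ℕ) (hn : 5 ≤ n) (S : Set (Equiv.Perm (Fin n))) (last K1 : Fin n)
    (hn1 : (last : ℕ) = n - 1) (hK1v : (K1 : ℕ) = n - 2) :
    ((bubbleSortGraph n).induce
      ({u | ({v ∈ S | v last = u last}).ncard ≤ n - 3} \ S)).Preconnected := by
  classical
  set A₂ : Set (Equiv.Perm (Fin n)) := {u | ({v ∈ S | v last = u last}).ncard ≤ n - 3}
    with hA2def
  have hKK1 : (K1:ℕ) + 1 = (last:ℕ) := by omega
  have hK1K : K1 ≠ last := by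
    intro e
    have := congrArg Fin.val e
    rw [hK1v, hn1] at this
    omega
  set s := Equiv.swap K1 last with hsdef
  have h_sK : ∀ u : Equiv.Perm (Fin n), (u * s) last = u K1 := fun u => by
    simp [hsdef, Equiv.Perm.mul_apply, Equiv.swap_apply_right]
  have hjlast : ∀ j : Fin n, n - 1 ≤ (j:ℕ) → j = last := by
    intro j hj
    apply Fin.ext
    have := j.2
    rw [hn1]
    omega
  have hcos : ∀ u x : Equiv.Perm (Fin n), x ∈ coset n (n-1) ⇑u ↔ x last = u last := by
    intro u x
    constructor
    · intro h
      exact h last (by omega)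
    · intro h j hj
      rw [hjlast j hj]
      exact h
  have hA2 : ∀ u : Equiv.Perm (Fin n), u ∈ A₂ ↔ (S ∩ coset n (n-1) ⇑u).ncard ≤ n - 3 := by
    intro u
    have hset : {v ∈ S | v last = u last} = S ∩ coset n (n-1) ⇑u := by
      ext x
      simp only [Set.mem_inter_iff, Set.mem_sep_iff]
      exact and_congr_right fun _ => (hcos u x).symm
    constructor
    · intro h
      rw [← hset]
      exact h
    · intro h
      show ({v ∈ S | v last = u last}).ncard ≤ n - 3
      rw [hset]
      exact h
  have hA2' : ∀ u w : Equiv.Perm (Fin n), w last = u last → u ∈ A₂ → w ∈ A₂ := by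
    intro u w hwl hu
    rw [hA2] at hu ⊢
    have hcc : coset n (n-1) ⇑w = coset n (n-1) ⇑u := coset_congr ((hcos u w).2 hwl)
    rw [hcc]
    exact hu
  have intra : ∀ x y (hx : x ∈ A₂ \ S) (hy : y ∈ A₂ \ S), x last = y last →
      ((bubbleSortGraph n).induce (A₂ \ S)).Reachable ⟨x, hx⟩ ⟨y, hy⟩ := by
    intro x y hx hy hxy
    have hT : (S ∩ coset n (n-1) ⇑x).ncard ≤ (n-1) - 2 := by
      have := (hA2 x).1 hx.1
      omega
    have hmx : x ∈ coset n (n-1) ⇑x \ (S ∩ coset n (n-1) ⇑x) :=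
      ⟨self_mem_coset x, fun h => hx.2 h.1⟩
    have hmy : y ∈ coset n (n-1) ⇑x \ (S ∩ coset n (n-1) ⇑x) :=
      ⟨(hcos x y).2 hxy.symm, fun h => hy.2 h.1⟩
    have hre := key (n := n) (n-1) (by omega) ⇑x (S ∩ coset n (n-1) ⇑x) hT ⟨x, hmx⟩ ⟨y, hmy⟩
    have hsub : coset n (n-1) ⇑x \ (S ∩ coset n (n-1) ⇑x) ⊆ A₂ \ S := by
      intro w hw
      have hwl : w last = x last := (hcos x w).1 hw.1
      exact ⟨hA2' x w hwl hx.1, fun hws => hw.2 ⟨hws, hw.1⟩⟩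
    exact reach_mono hsub hmx hmy hre
  rintro ⟨a, ha⟩ ⟨b, hb⟩
  by_cases hab : a last = b last
  · exact intra a b ha hb hab
  · by_cases hal : ∃ u : Equiv.Perm (Fin n),
        u last = a last ∧ u K1 = b last ∧ u ∉ S ∧ u * s ∉ S
    · obtain ⟨u, huK, huK1, huS, husS⟩ := hal
      have huA : u ∈ A₂ := hA2' a u huK ha.1
      have husA : u * s ∈ A₂ := hA2' b (u*s) (by rw [h_sK]; exact huK1) hb.1
      have mu : u ∈ A₂ \ S := ⟨huA, huS⟩
      have mus : u * s ∈ A₂ \ S := ⟨husA, husS⟩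
      exact ((intra a u ha mu huK.symm).trans
        (reach_of_adj mu mus (adj_mul_swap u hKK1))).trans
        (intra (u*s) b mus hb (by rw [h_sK]; exact huK1))
    · exfalso
      push_neg at hal
      have hpk : ((a⁻¹ (b last) : Fin n) : ℕ) < n - 1 := by
        have hne : a⁻¹ (b last) ≠ last := by
          intro e
          apply hab
          have h1 : a (a⁻¹ (b last)) = b last := by simp
          rw [e] at h1
          exact h1
        have h2 := (a⁻¹ (b last)).2
        by_contra hge
        apply hne
        apply Fin.ext
        rw [hn1]
        omega
      set u₀ := a * Equiv.swap K1 (a⁻¹ (b last)) with hu₀def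
      have hu₀c : u₀ ∈ coset n (n-1) ⇑a := mul_swap_mem_coset a (by omega) hpk
      have hu₀K : u₀ last = a last := (hcos a u₀).1 hu₀c
      have hu₀1 : u₀ K1 = b last := by
        simp [hu₀def, Equiv.Perm.mul_apply, Equiv.swap_apply_left]
      have hdead : ∀ u ∈ coset n (K1:ℕ) ⇑u₀, u ∈ S ∨ u * Equiv.swap K1 last ∈ S := by
        intro u hu
        by_contra hcon
        push_neg at hcon
        have h1 : u last = a last := (hu last (by omega)).trans hu₀K
        have h2 : u K1 = b last := (hu K1 (by omega)).trans hu₀1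
        exact hcon.2 (hal u h1 h2 hcon.1)
      have hne : u₀ last ≠ u₀ K1 := by
        rw [hu₀K, hu₀1]
        exact hab
      have hcount := dead_count hKK1 S u₀ hne hdead
      rw [hu₀K, hu₀1] at hcount
      have hsubX : S ∩ Xset n K1 last (a last) (b last) ⊆
          (S ∩ coset n (n-1) ⇑a) ∪ (S ∩ coset n (n-1) ⇑b) := by
        rintro x ⟨hxS, hX⟩
        rcases hX with ⟨h1, h2⟩ | ⟨h1, h2⟩
        · exact Or.inl ⟨hxS, (hcos a x).2 h1⟩
        · exact Or.inr ⟨hxS, (hcos b x).2 h1⟩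
      have hca := (hA2 a).1 ha.1
      have hcb := (hA2 b).1 hb.1
      have hle : (S ∩ Xset n K1 last (a last) (b last)).ncard ≤ (n-3) + (n-3) := by
        calc (S ∩ Xset n K1 last (a last) (b last)).ncard
            ≤ ((S ∩ coset n (n-1) ⇑a) ∪ (S ∩ coset n (n-1) ⇑b)).ncard :=
              Set.ncard_le_ncard hsubX (Set.toFinite _)
          _ ≤ _ := le_trans (Set.ncard_union_le _ _) (by omega)
      have hf1 : 2 ≤ (n-3).factorial := le_trans (by omega) (Nat.self_le_factorial (n-3))
      have hf2 : (n-2).factorial = (n-2) * (n-3).factorial := by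
        have he : n - 2 = (n-3) + 1 := by omega
        rw [he, Nat.factorial_succ]
      have hf3 : (n-2) * 2 ≤ (n-2) * (n-3).factorial := Nat.mul_le_mul_left _ hf1
      have hf4 : (n-2) * 2 ≤ (n-2).factorial := by
        rw [hf2]
        exact hf3
      have hKfacteq : ((K1:ℕ)).factorial = (n-2).factorial := by rw [hK1v]
      omega

end BSGAux

theorem stmt_10 (n : ℕ) (hn : 5 ≤ n) (S : Set (Equiv.Perm (Fin n))) :
    letI last : Fin n := ⟨n - 1, by omega⟩
    -- `A₂` is the union of the subgraphs `Bₙⁱ` containing at most `n - 3` vertices of `S`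
    letI A₂ : Set (Equiv.Perm (Fin n)) :=
      {u | ({v ∈ S | v last = u last}).ncard ≤ n - 3}
    ((bubbleSortGraph n).induce (A₂ \ S)).Preconnected := by
  exact BSGAux.top n hn S ⟨n - 1, by omega⟩ ⟨n - 2, by omega⟩ rfl rfl
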